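/- Let X ⊆ P^1 be the 0-dimensional scheme with vanishing ideal I_X = (F) in S = K[X_0,X_1], where F = Π_{i=1}^s (X_1 - a_i X_0)^{m_i} with distinct a_1,...,a_s ∈ K and m_i ≥ 1, and let μ = Σ m_i. Then for every i ∈ ℤ, the dimension of the degree-i component of Ω^2_{R_X/K} equals binom(i-1,1) - 2·binom(i-μ,1) + binom(i-s-μ+1,1) (where binom(k,1) = max(k,0) interpreted via Hilbert functions of S), i.e., the Hilbert function of Ω^2_{R_X/K} takes the values 0, 0, 1, 2, ..., μ-2, μ-1, μ-2, ..., μ-s, μ-s, ... in degrees 0, 1, 2, .... -/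

import Mathlib

open MvPolynomial

set_option maxHeartbeats 1000000
set_option synthInstance.maxHeartbeats 400000

/-- The Hilbert function of `S/J` (`S = K[X_0, X_1]`, `J` a homogeneous ideal)
at degree `i`: the `K`-dimension of the image of the space of homogeneous
polynomials of degree `i` in `S/J`. -/
noncomputable def hilbertFnQuot (K : Type) [Field K]
    (J : Ideal (MvPolynomial (Fin 2) K)) (i : ℕ) : ℕ :=
  Module.finrank K
    ((MvPolynomial.homogeneousSubmodule (Fin 2) K i) ⧸
      (Submodule.comap (MvPolynomial.homogeneousSubmodule (Fin 2) K i).subtype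
        (Submodule.restrictScalars K J)))

open Finset Module

namespace HFAux

variable {K : Type} [Field K]

lemma fin2_degree (u : Fin 2 →₀ ℕ) : u.degree = u 0 + u 1 := by
  rw [Finsupp.degree_apply, Finset.sum_subset (Finset.subset_univ _)
    (by intro x _ hx; simpa using Finsupp.notMem_support_iff.mp hx)]
  simp [Fin.sum_univ_two]

/-- exponent vector of the `j`-th monomial of degree `n` -/
noncomputable def mdeg (n : ℕ) (j : Fin (n+1)) : Fin 2 →₀ ℕ :=
  Finsupp.single 0 (j : ℕ) + Finsupp.single 1 (n - (j : ℕ))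

lemma mdeg_apply_zero (n : ℕ) (j : Fin (n+1)) : mdeg n j 0 = (j : ℕ) := by
  simp [mdeg]

lemma mdeg_apply_one (n : ℕ) (j : Fin (n+1)) : mdeg n j 1 = n - (j : ℕ) := by
  simp [mdeg]

lemma mdeg_degree (n : ℕ) (j : Fin (n+1)) : (mdeg n j).degree = n := by
  rw [fin2_degree, mdeg_apply_zero, mdeg_apply_one]
  omega

lemma mdeg_injective (n : ℕ) : Function.Injective (mdeg n) := by
  intro j j' h
  have := congrArg (fun u : Fin 2 →₀ ℕ => u 0) h
  simp only [mdeg_apply_zero] at this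
  exact Fin.ext this

lemma homogeneousSubmodule_eq_span (n : ℕ) :
    homogeneousSubmodule (Fin 2) K n =
      Submodule.span K (Set.range fun j : Fin (n+1) =>
        (monomial (mdeg n j) (1 : K) : MvPolynomial (Fin 2) K)) := by
  apply le_antisymm
  · intro p hp
    rw [mem_homogeneousSubmodule] at hp
    rw [p.as_sum]
    refine Submodule.sum_mem _ ?_
    intro v hv
    have hvd : v.degree = n := by
      by_contra hne
      exact (mem_support_iff.mp hv) (hp.coeff_eq_zero hne)
    have hv0 : v 0 < n + 1 := by
      have := fin2_degree v
      omega
    have hveq : v = mdeg n ⟨v 0, hv0⟩ := by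
      apply Finsupp.ext
      rw [Fin.forall_fin_two]
      have hd := fin2_degree v
      constructor
      · simp [mdeg_apply_zero]
      · rw [mdeg_apply_one]
        simp only [Fin.val_mk]
        omega
    have : (monomial v (coeff v p) : MvPolynomial (Fin 2) K) =
        coeff v p • monomial (mdeg n ⟨v 0, hv0⟩) (1 : K) := by
      rw [smul_monomial, smul_eq_mul, mul_one]
      exact congrArg (fun u => monomial u (coeff v p)) hveq
    rw [this]
    exact Submodule.smul_mem _ _ (Submodule.subset_span ⟨⟨v 0, hv0⟩, rfl⟩)
  · rw [Submodule.span_le]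
    rintro _ ⟨j, rfl⟩
    rw [SetLike.mem_coe, mem_homogeneousSubmodule]
    exact isHomogeneous_monomial _ (mdeg_degree n j)

lemma linearIndependent_mdeg (n : ℕ) :
    LinearIndependent K (fun j : Fin (n+1) =>
      (monomial (mdeg n j) (1 : K) : MvPolynomial (Fin 2) K)) := by
  have h := (basisMonomials (Fin 2) K).linearIndependent.comp (mdeg n) (mdeg_injective n)
  simpa [coe_basisMonomials, Function.comp_def] using h

lemma finrank_homogeneousSubmodule (n : ℕ) :
    Module.finrank K (homogeneousSubmodule (Fin 2) K n) = n + 1 := by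
  rw [homogeneousSubmodule_eq_span]
  rw [finrank_span_eq_card (linearIndependent_mdeg n)]
  simp

instance (n : ℕ) : FiniteDimensional K (homogeneousSubmodule (Fin 2) K n) := by
  rw [homogeneousSubmodule_eq_span]
  exact FiniteDimensional.span_of_finite K (Set.finite_range _)

/-- homogeneous component of a product with a homogeneous polynomial -/
lemma hc_mul {f : MvPolynomial (Fin 2) K} {n : ℕ} (hf : f.IsHomogeneous n)
    (p : MvPolynomial (Fin 2) K) (k : ℕ) :
    homogeneousComponent (n + k) (f * p) = f * homogeneousComponent k p := by
  conv_lhs => rw [← p.sum_homogeneousComponent, Finset.mul_sum, map_sum]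
  have hterm : ∀ j, homogeneousComponent (n + k) (f * homogeneousComponent j p) =
      if k = j then f * homogeneousComponent j p else 0 := by
    intro j
    have hmem : f * homogeneousComponent j p ∈ homogeneousSubmodule (Fin 2) K (n + j) := by
      rw [mem_homogeneousSubmodule]
      exact hf.mul (homogeneousComponent_isHomogeneous j p)
    rw [homogeneousComponent_of_mem hmem]
    congr 1
    simp only [eq_iff_iff]
    omega
  simp_rw [hterm]
  rw [Finset.sum_ite_eq (Finset.range (p.totalDegree + 1))]
  split_ifs with h
  · rfl
  · rw [homogeneousComponent_eq_zero, mul_zero]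
    simpa using h

lemma hc_mul_lt {f : MvPolynomial (Fin 2) K} {n : ℕ} (hf : f.IsHomogeneous n)
    (p : MvPolynomial (Fin 2) K) {t : ℕ} (ht : t < n) :
    homogeneousComponent t (f * p) = 0 := by
  conv_lhs => rw [← p.sum_homogeneousComponent, Finset.mul_sum, map_sum]
  refine Finset.sum_eq_zero fun j _ => ?_
  have hmem : f * homogeneousComponent j p ∈ homogeneousSubmodule (Fin 2) K (n + j) := by
    rw [mem_homogeneousSubmodule]
    exact hf.mul (homogeneousComponent_isHomogeneous j p)
  rw [homogeneousComponent_of_mem hmem, if_neg (by omega)]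

end HFAux

namespace HFAux2
open HFAux


variable {K : Type} [Field K] {s : ℕ}

noncomputable def L (a : Fin s → K) (i : Fin s) : MvPolynomial (Fin 2) K :=
  X 1 - C (a i) * X 0

noncomputable def E (a : Fin s → K) (i : Fin s) : MvPolynomial (Fin 2) K :=
  ∏ j ∈ univ.erase i, L a j

noncomputable def Gp (a : Fin s → K) (m : Fin s → ℕ) : MvPolynomial (Fin 2) K :=
  ∏ i, L a i ^ (m i - 1)

noncomputable def Ap (a : Fin s → K) (m : Fin s → ℕ) : MvPolynomial (Fin 2) K :=
  ∑ i, C (-(a i) * (m i : K)) * E a i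

noncomputable def Bp (a : Fin s → K) (m : Fin s → ℕ) : MvPolynomial (Fin 2) K :=
  ∑ i, C ((m i : K)) * E a i

lemma L_hom (a : Fin s → K) (i : Fin s) : (L a i).IsHomogeneous 1 :=
  (isHomogeneous_X _ _).sub (isHomogeneous_C_mul_X _ _)

lemma eval_L (a : Fin s → K) (k : Fin s) (j : Fin s) :
    eval (fun t : Fin 2 => if t = 0 then 1 else a k) (L a j) = a k - a j := by
  simp [L]

lemma L_ne (a : Fin s → K) (i : Fin s) : L a i ≠ 0 := by
  intro h
  have := congrArg (eval (fun t : Fin 2 => if t = 0 then 0 else (1 : K))) h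
  simp [L] at this

lemma E_hom (a : Fin s → K) (i : Fin s) : (E a i).IsHomogeneous (s - 1) := by
  have h := MvPolynomial.IsHomogeneous.prod (univ.erase i) (L a) (fun _ => 1)
    (fun j _ => L_hom a j)
  simpa [E, Finset.card_erase_of_mem, Finset.card_univ] using h

lemma E_ne (a : Fin s → K) (i : Fin s) : E a i ≠ 0 :=
  Finset.prod_ne_zero_iff.mpr fun j _ => L_ne a j

lemma G_hom (a : Fin s → K) (m : Fin s → ℕ) :
    (Gp a m).IsHomogeneous (∑ i, (m i - 1)) := by
  refine MvPolynomial.IsHomogeneous.prod _ _ _ fun i _ => ?_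
  simpa using (L_hom a i).pow (m i - 1)

lemma G_ne (a : Fin s → K) (m : Fin s → ℕ) : Gp a m ≠ 0 :=
  Finset.prod_ne_zero_iff.mpr fun j _ => pow_ne_zero _ (L_ne a j)

lemma A_hom (a : Fin s → K) (m : Fin s → ℕ) : (Ap a m).IsHomogeneous (s - 1) :=
  MvPolynomial.IsHomogeneous.sum _ _ _ fun i _ => (E_hom a i).C_mul _

lemma B_hom (a : Fin s → K) (m : Fin s → ℕ) : (Bp a m).IsHomogeneous (s - 1) :=
  MvPolynomial.IsHomogeneous.sum _ _ _ fun i _ => (E_hom a i).C_mul _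

lemma B_ne [CharZero K] (a : Fin s → K) (ha : Function.Injective a)
    (m : Fin s → ℕ) (hm : ∀ i, 1 ≤ m i) (hs : 0 < s) : Bp a m ≠ 0 := by
  set k : Fin s := ⟨0, hs⟩
  set g : Fin 2 → K := fun t => if t = 0 then 1 else a k with hg
  have hevE : ∀ i, eval g (E a i) = ∏ j ∈ univ.erase i, (a k - a j) := by
    intro i
    rw [E, eval_prod]
    exact Finset.prod_congr rfl fun j _ => eval_L a k j
  have hev : eval g (Bp a m) = (m k : K) * ∏ j ∈ univ.erase k, (a k - a j) := by
    rw [Bp, map_sum]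
    rw [Finset.sum_eq_single k]
    · simp [hevE]
    · intro i _ hik
      rw [eval_mul, hevE]
      have : (∏ j ∈ univ.erase i, (a k - a j)) = 0 :=
        Finset.prod_eq_zero (Finset.mem_erase.mpr ⟨Ne.symm hik, Finset.mem_univ k⟩) (sub_self _)
      rw [this, mul_zero]
    · simp
  intro h
  rw [h, map_zero] at hev
  have h1 : (m k : K) ≠ 0 := Nat.cast_ne_zero.mpr (by have := hm k; omega)
  have h2 : (∏ j ∈ univ.erase k, (a k - a j)) ≠ 0 :=
    Finset.prod_ne_zero_iff.mpr fun j hj =>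
      sub_ne_zero.mpr fun he => (Finset.mem_erase.mp hj).1 (ha he.symm)
  exact mul_ne_zero h1 h2 hev.symm

lemma pderiv_finset_prod {ι : Type} [DecidableEq ι] (k : Fin 2) (t : Finset ι)
    (g : ι → MvPolynomial (Fin 2) K) :
    pderiv k (∏ i ∈ t, g i) = ∑ i ∈ t, pderiv k (g i) * ∏ j ∈ t.erase i, g j := by
  induction t using Finset.induction_on with
  | empty => simp
  | @insert a t ha ih =>
    rw [Finset.prod_insert ha, pderiv_mul, ih, Finset.sum_insert ha, Finset.erase_insert ha]
    rw [Finset.mul_sum]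
    congr 1
    refine Finset.sum_congr rfl fun i hi => ?_
    rw [Finset.erase_insert_of_ne (by rintro rfl; exact ha hi),
      Finset.prod_insert (by simp [ha, Finset.mem_erase])]
    ring

lemma key_prod (a : Fin s → K) (m : Fin s → ℕ) (hm : ∀ i, 1 ≤ m i) (i : Fin s) :
    L a i ^ (m i - 1) * ∏ j ∈ univ.erase i, L a j ^ (m j) = Gp a m * E a i := by
  have h1 : ∀ j ∈ univ.erase i, L a j ^ m j = L a j ^ (m j - 1) * L a j := fun j _ => by
    have h := pow_succ (L a j) (m j - 1)
    rw [Nat.sub_add_cancel (hm j)] at h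
    exact h
  rw [Finset.prod_congr rfl h1, Finset.prod_mul_distrib, ← mul_assoc,
    Finset.mul_prod_erase univ (fun j => L a j ^ (m j - 1)) (Finset.mem_univ i)]
  rfl

lemma pderiv_L_zero (a : Fin s → K) (i : Fin s) : pderiv 0 (L a i) = C (-(a i)) := by
  simp [L, pderiv_X]

lemma pderiv_L_one (a : Fin s → K) (i : Fin s) : pderiv 1 (L a i) = 1 := by
  simp [L, pderiv_X]

lemma DF0 (a : Fin s → K) (m : Fin s → ℕ) (hm : ∀ i, 1 ≤ m i) :
    pderiv 0 (∏ i, L a i ^ m i) = Gp a m * Ap a m := by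
  rw [pderiv_finset_prod]
  have h : ∀ i ∈ univ, pderiv 0 (L a i ^ m i) * ∏ j ∈ univ.erase i, L a j ^ m j
      = C (-(a i) * (m i : K)) * (Gp a m * E a i) := by
    intro i _
    rw [pderiv_pow, pderiv_L_zero, ← key_prod a m hm i]
    have hcast : ((m i : ℕ) : MvPolynomial (Fin 2) K) = C ((m i : K)) :=
      (map_natCast (C : K →+* MvPolynomial (Fin 2) K) (m i)).symm
    rw [hcast, C_mul, map_neg]
    ring
  rw [Finset.sum_congr rfl h, Ap, Finset.mul_sum]
  exact Finset.sum_congr rfl fun i _ => by ring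

lemma DF1 (a : Fin s → K) (m : Fin s → ℕ) (hm : ∀ i, 1 ≤ m i) :
    pderiv 1 (∏ i, L a i ^ m i) = Gp a m * Bp a m := by
  rw [pderiv_finset_prod]
  have h : ∀ i ∈ univ, pderiv 1 (L a i ^ m i) * ∏ j ∈ univ.erase i, L a j ^ m j
      = C ((m i : K)) * (Gp a m * E a i) := by
    intro i _
    rw [pderiv_pow, pderiv_L_one, ← key_prod a m hm i]
    have hcast : ((m i : ℕ) : MvPolynomial (Fin 2) K) = C ((m i : K)) :=
      (map_natCast (C : K →+* MvPolynomial (Fin 2) K) (m i)).symm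
    rw [hcast]
    ring
  rw [Finset.sum_congr rfl h, Bp, Finset.mul_sum]
  exact Finset.sum_congr rfl fun i _ => by ring

lemma euler (a : Fin s → K) (m : Fin s → ℕ) :
    X 0 * Ap a m + X 1 * Bp a m = C ((∑ i, m i : ℕ) : K) * ∏ i, L a i := by
  rw [Ap, Bp, Finset.mul_sum, Finset.mul_sum, ← Finset.sum_add_distrib]
  have h : ∀ i ∈ univ, X 0 * (C (-(a i) * (m i : K)) * E a i) +
      X 1 * (C ((m i : K)) * E a i) = C ((m i : K)) * ∏ j, L a j := by
    intro i _
    rw [← Finset.mul_prod_erase univ (L a) (Finset.mem_univ i), ← E]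
    rw [L, C_mul, map_neg]
    ring
  rw [Finset.sum_congr rfl h, ← Finset.sum_mul, ← map_sum]
  push_cast
  ring

lemma unit_C {c : K} (hc : c ≠ 0) : IsUnit (C c : MvPolynomial (Fin 2) K) :=
  (isUnit_iff_ne_zero.mpr hc).map (C : K →+* MvPolynomial (Fin 2) K)

lemma dvd_of_unit_mul_dvd {u x q : MvPolynomial (Fin 2) K} (hu : IsUnit u)
    (h : q ∣ u * x) : q ∣ x := by
  rcases hu with ⟨w, rfl⟩
  exact Units.dvd_mul_left.mp h

lemma not_dvd_X01 {q : MvPolynomial (Fin 2) K} (hq : Prime q)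
    (h0 : q ∣ X 0) (h1 : q ∣ X 1) : False := by
  have h0' := map_dvd (MvPolynomial.finSuccEquiv K 1) h0
  rw [MvPolynomial.finSuccEquiv_X_zero] at h0'
  have h1' := map_dvd (MvPolynomial.finSuccEquiv K 1) h1
  rw [show ((1 : Fin 2)) = Fin.succ 0 from rfl, MvPolynomial.finSuccEquiv_X_succ] at h1'
  set q' := (MvPolynomial.finSuccEquiv K 1) q with hq'
  have hCne : (Polynomial.C (X 0) : Polynomial (MvPolynomial (Fin 1) K)) ≠ 0 :=
    Polynomial.C_ne_zero.mpr (MvPolynomial.X_ne_zero 0)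
  have hdeg : q'.degree ≤ 0 := by
    have := Polynomial.degree_le_of_dvd h1' hCne
    simpa using this
  have hqC : q' = Polynomial.C (q'.coeff 0) := Polynomial.eq_C_of_degree_le_zero hdeg
  obtain ⟨t, ht⟩ := h0'
  rw [hqC] at ht
  have hcoeff := congrArg (fun p => Polynomial.coeff p 1) ht
  simp only [Polynomial.coeff_X_one, Polynomial.coeff_C_mul] at hcoeff
  have hunit : IsUnit (q'.coeff 0) := IsUnit.of_mul_eq_one _ hcoeff.symm
  have hu' : IsUnit q' := hqC ▸ Polynomial.isUnit_C.mpr hunit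
  have h2 := hu'.map (MvPolynomial.finSuccEquiv K 1).symm
  rw [hq', AlgEquiv.symm_apply_apply] at h2
  exact hq.not_unit h2

lemma relPrime [CharZero K] (a : Fin s → K) (ha : Function.Injective a)
    (m : Fin s → ℕ) (hm : ∀ i, 1 ≤ m i) (hs : 0 < s) :
    IsRelPrime (Bp a m) (Ap a m) := by
  intro c hcB hcA
  by_contra hcu
  have hc0 : c ≠ 0 := by
    rintro rfl
    exact B_ne a ha m hm hs (zero_dvd_iff.mp hcB)
  obtain ⟨q, hqirr, hqc⟩ := WfDvdMonoid.exists_irreducible_factor hcu hc0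
  have hq : Prime q := UniqueFactorizationMonoid.irreducible_iff_prime.mp hqirr
  have hqB : q ∣ Bp a m := hqc.trans hcB
  have hqA : q ∣ Ap a m := hqc.trans hcA
  -- Euler: q divides C μ * ∏ L
  have hμne : ((∑ i, m i : ℕ) : K) ≠ 0 := by
    refine Nat.cast_ne_zero.mpr ?_
    have : 1 ≤ ∑ i, m i := le_trans (hm ⟨0, hs⟩) (Finset.single_le_sum (f := m) (fun _ _ => Nat.zero_le _) (mem_univ _))
    omega
  have hqprod : q ∣ ∏ i, L a i := by
    refine dvd_of_unit_mul_dvd (unit_C hμne) ?_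
    rw [← euler a m]
    exact dvd_add (hqA.mul_left _) (hqB.mul_left _)
  obtain ⟨k, -, hqLk⟩ := hq.exists_mem_finset_dvd hqprod
  have hqEk : q ∣ E a k := by
    have hmk : ((m k : ℕ) : K) ≠ 0 := Nat.cast_ne_zero.mpr (by have := hm k; omega)
    refine dvd_of_unit_mul_dvd (unit_C hmk) ?_
    have hsum : Bp a m = C ((m k : K)) * E a k + ∑ i ∈ univ.erase k, C ((m i : K)) * E a i := by
      rw [Bp, ← Finset.add_sum_erase _ _ (mem_univ k)]
    have hdvdsum : q ∣ ∑ i ∈ univ.erase k, C ((m i : K)) * E a i := by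
      refine Finset.dvd_sum fun i hi => ?_
      have hik : k ≠ i := Ne.symm (Finset.mem_erase.mp hi).1
      have hLE : L a k ∣ E a i :=
        Finset.dvd_prod_of_mem _ (Finset.mem_erase.mpr ⟨hik, mem_univ _⟩)
      exact ((hqLk.trans hLE).mul_left _)
    have : C ((m k : K)) * E a k = Bp a m - ∑ i ∈ univ.erase k, C ((m i : K)) * E a i := by
      rw [hsum]; ring
    rw [this]
    exact dvd_sub hqB hdvdsum
  obtain ⟨j, hjmem, hqLj⟩ := hq.exists_mem_finset_dvd hqEk
  have hjk : j ≠ k := (Finset.mem_erase.mp hjmem).1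
  have hqX0 : q ∣ X 0 := by
    have hne : a j - a k ≠ 0 := sub_ne_zero.mpr fun h => hjk (ha h)
    refine dvd_of_unit_mul_dvd (unit_C hne) ?_
    have : C (a j - a k) * X 0 = L a k - L a j := by
      rw [L, L, map_sub]; ring
    rw [this]
    exact dvd_sub hqLk hqLj
  have hqX1 : q ∣ X 1 := by
    have : (X 1 : MvPolynomial (Fin 2) K) = L a k + C (a k) * X 0 := by rw [L]; ring
    rw [this]
    exact dvd_add hqLk (hqX0.mul_left _)
  exact not_dvd_X01 hq hqX0 hqX1

end HFAux2



open HFAux HFAux2 Finset Module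

/-- Let `X ⊆ ℙ¹` be the 0-dimensional scheme with `I_X = (F)`,
`F = ∏_{i=1}^s (X_1 - a_i X_0)^{m_i}`, the `a_i` distinct, `m_i ≥ 1`,
`μ = ∑ m_i`.  By Corollary 1.2, `Ω²_{R_X/K} ≅ (S/(∂F/∂X_0, ∂F/∂X_1))(-2)`, so
its Hilbert function is `HF_{Ω²}(k) = HF_{S/J}(k-2)` with `J` the Jacobian
ideal.  The claim (stated here for `k = i + 2`, so that all `i : ℕ` are covered
and the values in degrees `< 2` are `0` automatically) is
`HF_{Ω²}(i+2) = binom(i+1,1) - 2·binom(i+2-μ,1) + binom(i+3-s-μ,1)`,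
where `binom(k,1) = max(k,0)`; i.e. the Hilbert function of `Ω²_{R_X/K}` takes
the values `0, 0, 1, 2, …, μ-2, μ-1, μ-2, …, μ-s, μ-s, …` in degrees
`0, 1, 2, …`. -/
theorem hilbert_function_omega2_P1 (K : Type) [Field K] [CharZero K] (s : ℕ)
    (hs : 1 ≤ s) (a : Fin s → K) (ha : Function.Injective a)
    (m : Fin s → ℕ) (hm : ∀ i, 1 ≤ m i) (μ : ℕ) (hμ : μ = ∑ i, m i)
    (F : MvPolynomial (Fin 2) K)
    (hF : F = ∏ i : Fin s,
      (MvPolynomial.X 1 - MvPolynomial.C (a i) * MvPolynomial.X 0) ^ (m i)) :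
    ∀ i : ℕ,
      (hilbertFnQuot K
          (Ideal.span {MvPolynomial.pderiv 0 F, MvPolynomial.pderiv 1 F}) i : ℤ) =
        ((i : ℤ) + 1) - 2 * max ((i : ℤ) + 2 - (μ : ℤ)) 0 +
          max ((i : ℤ) + 3 - (s : ℤ) - (μ : ℤ)) 0 := by
  intro i
  obtain ⟨s', rfl⟩ : ∃ s', s = s' + 1 := ⟨s - 1, by omega⟩
  have hFL : F = ∏ j, L a j ^ m j := hF
  have hf0 : MvPolynomial.pderiv 0 F = Gp a m * Ap a m := by rw [hFL]; exact DF0 a m hm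
  have hf1 : MvPolynomial.pderiv 1 F = Gp a m * Bp a m := by rw [hFL]; exact DF1 a m hm
  set f0 := MvPolynomial.pderiv 0 F with hf0def
  set f1 := MvPolynomial.pderiv 1 F with hf1def
  set ν := ∑ j, (m j - 1) with hν
  set N := ν + s' with hN
  have hμ' : μ = N + 1 := by
    rw [hμ, hN, hν]
    have : ∀ j ∈ Finset.univ, m j = (m j - 1) + 1 := fun j _ => by have := hm j; omega
    rw [Finset.sum_congr rfl this, Finset.sum_add_distrib]
    simp
    omega
  have hAhom : (Ap a m).IsHomogeneous s' := by simpa using A_hom a m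
  have hBhom : (Bp a m).IsHomogeneous s' := by simpa using B_hom a m
  have hGhom : (Gp a m).IsHomogeneous ν := G_hom a m
  have hf0hom : f0.IsHomogeneous N := by rw [hf0]; exact hGhom.mul hAhom
  have hf1hom : f1.IsHomogeneous N := by rw [hf1]; exact hGhom.mul hBhom
  have hBne : Bp a m ≠ 0 := B_ne a ha m hm (by omega)
  have hGne : Gp a m ≠ 0 := G_ne a m
  have hrel : IsRelPrime (Bp a m) (Ap a m) := relPrime a ha m hm (by omega)
  set J : Ideal (MvPolynomial (Fin 2) K) := Ideal.span {f0, f1} with hJ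
  rcases lt_or_ge i N with hiN | hiN
  · -- degree too small : quotient is everything
    set W := Submodule.comap (homogeneousSubmodule (Fin 2) K i).subtype
      (Submodule.restrictScalars K J) with hW
    have hWbot : W = ⊥ := by
      rw [Submodule.eq_bot_iff]
      rintro ⟨x, hx⟩ hmem
      have hxJ : x ∈ J := hmem
      obtain ⟨p, q, hpq⟩ := Ideal.mem_span_pair.mp hxJ
      have hx0 : x = 0 := by
        have h1 : homogeneousComponent i x = x := by
          rw [homogeneousComponent_of_mem hx, if_pos rfl]
        rw [← h1, ← hpq, map_add, mul_comm p f0, mul_comm q f1,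
          hc_mul_lt hf0hom p hiN, hc_mul_lt hf1hom q hiN, add_zero]
      exact Subtype.ext hx0
    have hdim : hilbertFnQuot K J i + finrank K W = i + 1 := by
      have h := Submodule.finrank_quotient_add_finrank
        (Submodule.comap (homogeneousSubmodule (Fin 2) K i).subtype (Submodule.restrictScalars K J))
      rw [finrank_homogeneousSubmodule] at h
      exact h
    rw [hWbot, finrank_bot] at hdim
    have hmax1 : max ((i : ℤ) + 2 - (μ : ℤ)) 0 = 0 :=
      max_eq_right (by push_cast [hμ']; omega)
    have hmax2 : max ((i : ℤ) + 3 - ((s' + 1 : ℕ) : ℤ) - (μ : ℤ)) 0 = 0 :=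
      max_eq_right (by push_cast [hμ']; omega)
    rw [hmax1, hmax2]
    push_cast
    omega
  · -- degree at least N
    obtain ⟨d, rfl⟩ : ∃ d, i = N + d := ⟨i - N, by omega⟩
    set Sd := homogeneousSubmodule (Fin 2) K d with hSd
    set Si := homogeneousSubmodule (Fin 2) K (N + d) with hSi
    set W := Submodule.comap Si.subtype (Submodule.restrictScalars K J) with hW
    have hΦadd : ∀ (x y : ↥Sd × ↥Sd),
        ((x.1 + y.1 : ↥Sd) : MvPolynomial (Fin 2) K) * f0 + ((x.2 + y.2 : ↥Sd) : MvPolynomial (Fin 2) K) * f1 =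
        ((x.1 : MvPolynomial (Fin 2) K) * f0 + (x.2 : MvPolynomial (Fin 2) K) * f1) +
        ((y.1 : MvPolynomial (Fin 2) K) * f0 + (y.2 : MvPolynomial (Fin 2) K) * f1) := by
      intro x y
      push_cast
      ring
    set Φ₀ : (↥Sd × ↥Sd) →ₗ[K] MvPolynomial (Fin 2) K :=
      { toFun := fun pq => (pq.1 : MvPolynomial (Fin 2) K) * f0 + (pq.2 : MvPolynomial (Fin 2) K) * f1
        map_add' := fun x y => hΦadd x y
        map_smul' := by
          rintro c ⟨p, q⟩
          simp only [Prod.smul_fst, Prod.smul_snd, Submodule.coe_smul, RingHom.id_apply]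
          rw [smul_add, smul_mul_assoc, smul_mul_assoc] } with hΦ₀
    have hΦmem : ∀ pq : ↥Sd × ↥Sd, Φ₀ pq ∈ Si := by
      rintro ⟨p, q⟩
      rw [mem_homogeneousSubmodule, add_comm N d]
      exact (((mem_homogeneousSubmodule _ _).mp p.2).mul hf0hom).add
        (((mem_homogeneousSubmodule _ _).mp q.2).mul hf1hom)
    set Φ : (↥Sd × ↥Sd) →ₗ[K] ↥Si := Φ₀.codRestrict Si hΦmem with hΦdef
    have hrange : LinearMap.range Φ = W := by
      apply Submodule.ext
      intro x
      constructor
      · rintro ⟨pq, rfl⟩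
        show (Φ₀ pq : MvPolynomial (Fin 2) K) ∈ J
        exact Ideal.mem_span_pair.mpr ⟨pq.1, pq.2, rfl⟩
      · intro hx
        have hxJ : (x : MvPolynomial (Fin 2) K) ∈ J := hx
        obtain ⟨p, q, hpq⟩ := Ideal.mem_span_pair.mp hxJ
        refine ⟨(⟨homogeneousComponent d p, homogeneousComponent_mem d p⟩,
                 ⟨homogeneousComponent d q, homogeneousComponent_mem d q⟩), ?_⟩
        apply Subtype.ext
        show homogeneousComponent d p * f0 + homogeneousComponent d q * f1 = (x : MvPolynomial (Fin 2) K)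
        have hxx : homogeneousComponent (N + d) (x : MvPolynomial (Fin 2) K) = x := by
          rw [homogeneousComponent_of_mem x.2, if_pos rfl]
        calc homogeneousComponent d p * f0 + homogeneousComponent d q * f1
            = f0 * homogeneousComponent d p + f1 * homogeneousComponent d q := by ring
          _ = homogeneousComponent (N + d) (f0 * p) + homogeneousComponent (N + d) (f1 * q) := by
              rw [hc_mul hf0hom p d, hc_mul hf1hom q d]
          _ = homogeneousComponent (N + d) (p * f0 + q * f1) := by
              rw [map_add, mul_comm p f0, mul_comm q f1]
          _ = x := by rw [hpq, hxx]
    have hdim : hilbertFnQuot K J (N + d) + finrank K W = (N + d) + 1 := by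
      have h := Submodule.finrank_quotient_add_finrank
        (Submodule.comap (homogeneousSubmodule (Fin 2) K (N + d)).subtype (Submodule.restrictScalars K J))
      rw [finrank_homogeneousSubmodule] at h
      exact h
    have hprod : finrank K (↥Sd × ↥Sd) = (d + 1) + (d + 1) := by
      rw [Module.finrank_prod, hSd, finrank_homogeneousSubmodule]
    have hrank := LinearMap.finrank_range_add_finrank_ker Φ
    rw [hrange, hprod] at hrank
    -- kernel analysis
    have hker_elem : ∀ (p q : MvPolynomial (Fin 2) K), p.IsHomogeneous d → q.IsHomogeneous d →
        p * f0 + q * f1 = 0 → ∃ T0, p = Bp a m * T0 ∧ p * Ap a m = -(q * Bp a m) := by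
      intro p q hp hq hpq
      have hGsum : Gp a m * (p * Ap a m + q * Bp a m) = 0 := by
        rw [hf0, hf1] at hpq
        linear_combination hpq
      have hPA : p * Ap a m = -(q * Bp a m) := by
        have h := (mul_eq_zero.mp hGsum).resolve_left hGne
        linear_combination h
      have hBdvd : Bp a m ∣ p := by
        refine hrel.dvd_of_dvd_mul_right (y := p) ?_
        rw [hPA]
        exact ⟨-q, by ring⟩
      obtain ⟨T0, hT0⟩ := hBdvd
      exact ⟨T0, hT0, hPA⟩
    rcases lt_or_ge d s' with hds | hds
    · -- kernel is trivial
      have hker : LinearMap.ker Φ = ⊥ := by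
        rw [Submodule.eq_bot_iff]
        rintro ⟨⟨p, hp⟩, ⟨q, hq⟩⟩ hmem
        rw [LinearMap.mem_ker] at hmem
        have hpq : p * f0 + q * f1 = 0 := congrArg Subtype.val hmem
        obtain ⟨T0, hT0, hPA⟩ := hker_elem p q ((mem_homogeneousSubmodule _ _).mp hp)
          ((mem_homogeneousSubmodule _ _).mp hq) hpq
        have hp0 : p = 0 := by
          have h1 : homogeneousComponent d p = p := by
            rw [homogeneousComponent_of_mem hp, if_pos rfl]
          rw [← h1, hT0, hc_mul_lt hBhom T0 hds]
        have hq0 : q = 0 := by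
          rw [hp0, zero_mul] at hPA
          have h4 : q * Bp a m = 0 := by linear_combination hPA
          exact (mul_eq_zero.mp h4).resolve_right hBne
        refine Prod.ext (Subtype.ext ?_) (Subtype.ext ?_) <;> simp [hp0, hq0]
      rw [hker, finrank_bot] at hrank
      have hmax1 : max (((N + d : ℕ) : ℤ) + 2 - (μ : ℤ)) 0 = ((N + d : ℕ) : ℤ) + 2 - (μ : ℤ) :=
        max_eq_left (by push_cast [hμ']; omega)
      have hmax2 : max (((N + d : ℕ) : ℤ) + 3 - ((s' + 1 : ℕ) : ℤ) - (μ : ℤ)) 0 = 0 :=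
        max_eq_right (by push_cast [hμ']; omega)
      rw [hmax1, hmax2]
      push_cast [hμ'] at hdim hrank ⊢
      omega
    · -- kernel has dimension e + 1
      obtain ⟨e, rfl⟩ : ∃ e, d = s' + e := ⟨d - s', by omega⟩
      set Se := homogeneousSubmodule (Fin 2) K e with hSe
      have hΨmem1 : ∀ T : ↥Se, Bp a m * (T : MvPolynomial (Fin 2) K) ∈ Sd := by
        intro T
        rw [hSd, mem_homogeneousSubmodule]
        exact hBhom.mul ((mem_homogeneousSubmodule _ _).mp T.2)
      have hΨmem2 : ∀ T : ↥Se, -(Ap a m * (T : MvPolynomial (Fin 2) K)) ∈ Sd := by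
        intro T
        rw [hSd, mem_homogeneousSubmodule]
        exact (hAhom.mul ((mem_homogeneousSubmodule _ _).mp T.2)).neg
      set Ψ : ↥Se →ₗ[K] (↥Sd × ↥Sd) :=
        { toFun := fun T => (⟨Bp a m * (T : MvPolynomial (Fin 2) K), hΨmem1 T⟩,
                             ⟨-(Ap a m * (T : MvPolynomial (Fin 2) K)), hΨmem2 T⟩)
          map_add' := by
            intro T T'
            apply Prod.ext <;> apply Subtype.ext <;>
              simp only [Prod.fst_add, Prod.snd_add, Submodule.coe_add] <;> ring
          map_smul' := by
            intro c T
            apply Prod.ext <;> apply Subtype.ext <;>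
              simp only [Prod.smul_fst, Prod.smul_snd, Submodule.coe_smul, RingHom.id_apply,
                mul_smul_comm, smul_neg] } with hΨdef
      have hker : LinearMap.ker Φ = LinearMap.range Ψ := by
        apply Submodule.ext
        rintro ⟨⟨p, hp⟩, ⟨q, hq⟩⟩
        constructor
        · intro hmem
          rw [LinearMap.mem_ker] at hmem
          have hpq : p * f0 + q * f1 = 0 := congrArg Subtype.val hmem
          obtain ⟨T0, hT0, hPA⟩ := hker_elem p q ((mem_homogeneousSubmodule _ _).mp hp)
            ((mem_homogeneousSubmodule _ _).mp hq) hpq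
          refine ⟨⟨homogeneousComponent e T0, homogeneousComponent_mem e T0⟩, ?_⟩
          have hpT : p = Bp a m * homogeneousComponent e T0 := by
            have h1 : homogeneousComponent (s' + e) p = p := by
              rw [homogeneousComponent_of_mem hp, if_pos rfl]
            rw [← h1, hT0, hc_mul hBhom T0 e]
          have hqT : q = -(Ap a m * homogeneousComponent e T0) := by
            have h2 : q * Bp a m = -(Ap a m * homogeneousComponent e T0) * Bp a m := by
              have h3 : p * Ap a m = Bp a m * homogeneousComponent e T0 * Ap a m := by
                rw [← hpT]
              linear_combination hPA - h3
            exact mul_right_cancel₀ hBne h2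
          apply Prod.ext <;> apply Subtype.ext
          · exact hpT.symm
          · exact hqT.symm
        · rintro ⟨T, hT⟩
          rw [LinearMap.mem_ker]
          apply Subtype.ext
          have h1 : p = Bp a m * (T : MvPolynomial (Fin 2) K) := (congrArg (fun z => (z.1 : MvPolynomial (Fin 2) K)) hT).symm
          have h2 : q = -(Ap a m * (T : MvPolynomial (Fin 2) K)) := (congrArg (fun z => (z.2 : MvPolynomial (Fin 2) K)) hT).symm
          show p * f0 + q * f1 = 0
          rw [h1, h2, hf0, hf1]
          ring
      have hΨinj : Function.Injective Ψ := by
        rw [← LinearMap.ker_eq_bot]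
        rw [Submodule.eq_bot_iff]
        rintro ⟨T, hT⟩ hmem
        rw [LinearMap.mem_ker] at hmem
        have h1 : Bp a m * T = 0 := congrArg (fun z => (z.1 : MvPolynomial (Fin 2) K)) hmem
        have hT0 : T = 0 := (mul_eq_zero.mp h1).resolve_left hBne
        exact Subtype.ext hT0
      have hkerrank : finrank K (LinearMap.ker Φ) = e + 1 := by
        rw [hker, LinearMap.finrank_range_of_inj hΨinj, hSe, finrank_homogeneousSubmodule]
      rw [hkerrank] at hrank
      have hmax1 : max (((N + (s' + e) : ℕ) : ℤ) + 2 - (μ : ℤ)) 0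
          = ((N + (s' + e) : ℕ) : ℤ) + 2 - (μ : ℤ) :=
        max_eq_left (by push_cast [hμ']; omega)
      have hmax2 : max (((N + (s' + e) : ℕ) : ℤ) + 3 - ((s' + 1 : ℕ) : ℤ) - (μ : ℤ)) 0
          = ((N + (s' + e) : ℕ) : ℤ) + 3 - ((s' + 1 : ℕ) : ℤ) - (μ : ℤ) :=
        max_eq_left (by push_cast [hμ']; omega)
      rw [hmax1, hmax2]
      push_cast [hμ'] at hdim hrank ⊢
      omega
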